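/- Let y ∈ ℝ^D, let A ∈ ℝ^{D×D} be symmetric, and let S ∈ ℝ^{d×D} be a random matrix whose dD entries are independent Gaussians with mean 0 and variance 1/d. Then E_S[ ⟨(Sy)(Sy)ᵀ, S A Sᵀ⟩ ] = (1 + 1/d)·⟨y yᵀ, A⟩ + (‖y‖₂²/d)·Tr(A). -/

import Mathlib

open Matrix MeasureTheory ProbabilityTheory
open scoped NNReal Kronecker

/-- The spectral (operator) norm of a real square matrix. -/
noncomputable def specNorm {n : Type*} [Fintype n] [DecidableEq n] (A : Matrix n n ℝ) : ℝ :=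
  ‖Matrix.toEuclideanCLM (𝕜 := ℝ) A‖

/-- The Frobenius norm of a real square matrix: `√(Tr(Aᵀ A))`. -/
noncomputable def frobNorm {n : Type*} [Fintype n] (A : Matrix n n ℝ) : ℝ :=
  Real.sqrt ((Aᵀ * A).trace)

/-- The trace inner product `⟨A, B⟩ = Tr(Aᵀ B)` of real square matrices. -/
noncomputable def mInner {n : Type*} [Fintype n] (A B : Matrix n n ℝ) : ℝ :=
  (Aᵀ * B).trace

/-- The Euclidean (ℓ₂) norm of a vector in `ℝⁿ`. -/
noncomputable def l2norm {n : ℕ} (x : Fin n → ℝ) : ℝ := Real.sqrt (∑ i, (x i) ^ 2)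

/-- The sign cube `{-1, 1}ⁿ` as a finite set of vectors in `ℝⁿ`. -/
noncomputable def signs (n : ℕ) : Finset (Fin n → ℝ) :=
  Fintype.piFinset fun _ => ({-1, 1} : Finset ℝ)

/-- The distribution of a `d × D` random matrix with i.i.d. Gaussian entries of
mean `0` and variance `1/d`. -/
noncomputable def gaussMat (d D : ℕ) : Measure (Fin d → Fin D → ℝ) :=
  Measure.pi fun _ => Measure.pi fun _ => gaussianReal 0 (d : ℝ≥0)⁻¹

/-- The nuclear (trace) norm `Tr √(Mᵀ M)` of a real square matrix. -/
noncomputable def nucNorm {n : Type*} [Fintype n] [DecidableEq n] (M : Matrix n n ℝ) : ℝ :=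
  let hA := Matrix.posSemidef_conjTranspose_mul_self M
  ((hA.isHermitian.eigenvectorUnitary : Matrix n n ℝ) *
    diagonal ((RCLike.ofReal : ℝ → ℝ) ∘ Real.sqrt ∘ hA.isHermitian.eigenvalues) *
    star (hA.isHermitian.eigenvectorUnitary : Matrix n n ℝ)).trace

/-- The dual norm of a norm `N` on `ℝᵐ`: `‖y‖* = sup {⟨x, y⟩ : N x ≤ 1}`. -/
noncomputable def dualNorm {m : ℕ} (N : (Fin m → ℝ) → ℝ) (y : Fin m → ℝ) : ℝ :=
  sSup ((fun x => x ⬝ᵥ y) '' {x | N x ≤ 1})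

/-- The binary entropy function (base 2). -/
noncomputable def binH (p : ℝ) : ℝ := -p * Real.logb 2 p - (1 - p) * Real.logb 2 (1 - p)

section Aux
open Real Finset
open scoped ENNReal

lemma integrable_pow_mul_exp_neg_mul_sq' {b : ℝ} (hb : 0 < b) (n : ℕ) :
    Integrable fun x : ℝ => x ^ n * Real.exp (-b * x ^ 2) := by
  have h := integrable_rpow_mul_exp_neg_mul_sq hb (s := (n : ℝ)) (by exact_mod_cast lt_of_lt_of_le (by norm_num : (-1:ℝ) < 0) (Nat.cast_nonneg n))
  simpa [Real.rpow_natCast] using h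

lemma gauss_rec {b : ℝ} (hb : 0 < b) (n : ℕ) :
    (∫ x : ℝ, x ^ (n + 2) * Real.exp (-b * x ^ 2)) =
      ((n : ℝ) + 1) / (2 * b) * ∫ x : ℝ, x ^ n * Real.exp (-b * x ^ 2) := by
  have hderiv : ∀ x : ℝ, HasDerivAt (fun x : ℝ => x ^ (n + 1) * Real.exp (-b * x ^ 2))
      (((n : ℝ) + 1) * x ^ n * Real.exp (-b * x ^ 2)
        - 2 * b * (x ^ (n + 2) * Real.exp (-b * x ^ 2))) x := by
    intro x
    have h1 : HasDerivAt (fun x : ℝ => x ^ (n + 1)) (((n : ℝ) + 1) * x ^ n) x := by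
      simpa using hasDerivAt_pow (n + 1) x
    have h2 : HasDerivAt (fun x : ℝ => Real.exp (-b * x ^ 2))
        (Real.exp (-b * x ^ 2) * (-b * (2 * x))) x := by
      have : HasDerivAt (fun x : ℝ => -b * x ^ 2) (-b * (2 * x)) x := by
        simpa using ((hasDerivAt_pow 2 x).const_mul (-b))
      exact this.exp
    have := h1.mul h2
    refine this.congr_deriv ?_
    ring
  have hint : Integrable (fun x : ℝ => ((n : ℝ) + 1) * x ^ n * Real.exp (-b * x ^ 2)
      - 2 * b * (x ^ (n + 2) * Real.exp (-b * x ^ 2))) := by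
    apply Integrable.sub
    · simpa [mul_assoc] using (integrable_pow_mul_exp_neg_mul_sq' hb n).const_mul ((n : ℝ) + 1)
    · exact (integrable_pow_mul_exp_neg_mul_sq' hb (n + 2)).const_mul _
  have hf : Integrable (fun x : ℝ => x ^ (n + 1) * Real.exp (-b * x ^ 2)) :=
    integrable_pow_mul_exp_neg_mul_sq' hb (n + 1)
  have h0 := integral_eq_zero_of_hasDerivAt_of_integrable hderiv hint hf
  rw [integral_sub (by simpa [mul_assoc] using
      (integrable_pow_mul_exp_neg_mul_sq' hb n).const_mul ((n : ℝ) + 1))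
    ((integrable_pow_mul_exp_neg_mul_sq' hb (n + 2)).const_mul _)] at h0
  simp only [mul_assoc, integral_const_mul] at h0
  have hsub := sub_eq_zero.mp h0
  have hb2 : (2 * b) ≠ 0 := by positivity
  rw [div_mul_eq_mul_div, eq_div_iff hb2]
  linarith [hsub]

lemma gauss_odd {b : ℝ} (hb : 0 < b) :
    (∫ x : ℝ, x * Real.exp (-b * x ^ 2)) = 0 := by
  have hderiv : ∀ x : ℝ, HasDerivAt (fun x : ℝ => -(2 * b)⁻¹ * Real.exp (-b * x ^ 2))
      (x * Real.exp (-b * x ^ 2)) x := by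
    intro x
    have h2 : HasDerivAt (fun x : ℝ => Real.exp (-b * x ^ 2))
        (Real.exp (-b * x ^ 2) * (-b * (2 * x))) x := by
      have : HasDerivAt (fun x : ℝ => -b * x ^ 2) (-b * (2 * x)) x := by
        simpa using ((hasDerivAt_pow 2 x).const_mul (-b))
      exact this.exp
    have := h2.const_mul (-(2 * b)⁻¹)
    refine this.congr_deriv ?_
    field_simp
  have hf' : Integrable (fun x : ℝ => x * Real.exp (-b * x ^ 2)) :=
    integrable_mul_exp_neg_mul_sq hb
  have hf : Integrable (fun x : ℝ => -(2 * b)⁻¹ * Real.exp (-b * x ^ 2)) :=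
    (integrable_exp_neg_mul_sq hb).const_mul _
  exact integral_eq_zero_of_hasDerivAt_of_integrable hderiv hf' hf

section Moments

private noncomputable def pdfnn (v : ℝ≥0) (x : ℝ) : ℝ≥0 := (gaussianPDFReal 0 v x).toNNReal

private lemma pdfnn_meas (v : ℝ≥0) : Measurable (pdfnn v) :=
  (measurable_gaussianPDFReal 0 v).real_toNNReal

private lemma gaussianReal_eq_withDensity {v : ℝ≥0} (hv : v ≠ 0) :
    gaussianReal 0 v = (volume : Measure ℝ).withDensity (fun x => (pdfnn v x : ℝ≥0∞)) := by
  rw [gaussianReal_of_var_ne_zero 0 hv]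
  congr 1

lemma integral_gaussianReal_eq {v : ℝ≥0} (hv : v ≠ 0) (g : ℝ → ℝ) :
    (∫ x, g x ∂gaussianReal 0 v) = ∫ x, gaussianPDFReal 0 v x * g x := by
  rw [gaussianReal_eq_withDensity hv, integral_withDensity_eq_integral_smul (pdfnn_meas v)]
  congr 1
  ext x
  simp [pdfnn, NNReal.smul_def, Real.coe_toNNReal _ (gaussianPDFReal_nonneg 0 v x)]

private lemma pdf_mul {v : ℝ≥0} (hv : v ≠ 0) (n : ℕ) (x : ℝ) :
    gaussianPDFReal 0 v x * x ^ n =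
      (Real.sqrt (2 * π * v))⁻¹ * (x ^ n * Real.exp (-(2 * (v:ℝ))⁻¹ * x ^ 2)) := by
  have hv' : (0:ℝ) < v := by positivity
  have harg : -(x - 0) ^ 2 / (2 * (v:ℝ)) = -(2 * (v:ℝ))⁻¹ * x ^ 2 := by
    field_simp
    ring
  rw [gaussianPDFReal, harg]
  ring

lemma integrable_pow_gaussianReal {v : ℝ≥0} (hv : v ≠ 0) (n : ℕ) :
    Integrable (fun x : ℝ => x ^ n) (gaussianReal 0 v) := by
  have hv' : (0:ℝ) < v := by positivity
  have hb : (0:ℝ) < (2 * (v:ℝ))⁻¹ := by positivity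
  rw [gaussianReal_eq_withDensity hv,
    integrable_withDensity_iff_integrable_smul (pdfnn_meas v)]
  have : (fun x : ℝ => pdfnn v x • x ^ n) =
      fun x : ℝ => (Real.sqrt (2 * π * v))⁻¹ * (x ^ n * Real.exp (-(2 * (v:ℝ))⁻¹ * x ^ 2)) := by
    ext x
    rw [NNReal.smul_def, ← pdf_mul hv n x]
    simp [pdfnn, Real.coe_toNNReal _ (gaussianPDFReal_nonneg 0 v x)]
  rw [this]
  exact (integrable_pow_mul_exp_neg_mul_sq' hb n).const_mul _

private lemma mom_eq {v : ℝ≥0} (hv : v ≠ 0) (n : ℕ) :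
    (∫ x, x ^ n ∂gaussianReal 0 v) =
      (Real.sqrt (2 * π * v))⁻¹ * ∫ x : ℝ, x ^ n * Real.exp (-(2 * (v:ℝ))⁻¹ * x ^ 2) := by
  rw [integral_gaussianReal_eq hv]
  rw [← integral_const_mul]
  congr 1
  ext x
  exact pdf_mul hv n x

private lemma mom_zero {v : ℝ≥0} (hv : v ≠ 0) :
    (∫ x, x ^ 0 ∂gaussianReal 0 v) = 1 := by
  rw [integral_gaussianReal_eq hv]
  simpa using integral_gaussianPDFReal_eq_one 0 hv

lemma mom_one {v : ℝ≥0} (hv : v ≠ 0) :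
    (∫ x, x ^ 1 ∂gaussianReal 0 v) = 0 := by
  have hb : (0:ℝ) < (2 * (v:ℝ))⁻¹ := by positivity
  rw [mom_eq hv]
  simp only [pow_one]
  rw [gauss_odd hb, mul_zero]

lemma mom_two {v : ℝ≥0} (hv : v ≠ 0) :
    (∫ x, x ^ 2 ∂gaussianReal 0 v) = v := by
  have hv' : (0:ℝ) < v := by positivity
  have hb : (0:ℝ) < (2 * (v:ℝ))⁻¹ := by positivity
  have h0 := mom_zero hv
  rw [mom_eq hv] at h0 ⊢
  rw [show (2:ℕ) = 0 + 2 from rfl, gauss_rec hb 0]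
  rw [show ((0:ℕ):ℝ) + 1 = 1 by norm_num]
  have hby : (1:ℝ) / (2 * (2 * (v:ℝ))⁻¹) = v := by
    field_simp
  rw [← mul_assoc, mul_comm (Real.sqrt (2 * π * v))⁻¹ _, mul_assoc, hby, h0, mul_one]

lemma mom_three {v : ℝ≥0} (hv : v ≠ 0) :
    (∫ x, x ^ 3 ∂gaussianReal 0 v) = 0 := by
  have hb : (0:ℝ) < (2 * (v:ℝ))⁻¹ := by positivity
  rw [mom_eq hv, show (3:ℕ) = 1 + 2 from rfl, gauss_rec hb 1]
  simp only [pow_one]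
  rw [gauss_odd hb]
  ring

lemma mom_four {v : ℝ≥0} (hv : v ≠ 0) :
    (∫ x, x ^ 4 ∂gaussianReal 0 v) = 3 * (v:ℝ) ^ 2 := by
  have hv' : (0:ℝ) < v := by positivity
  have hb : (0:ℝ) < (2 * (v:ℝ))⁻¹ := by positivity
  have h2 := mom_two hv
  rw [mom_eq hv] at h2 ⊢
  rw [show (4:ℕ) = 2 + 2 from rfl, gauss_rec hb 2]
  have hby : ((2:ℕ):ℝ) + 1 = 3 := by norm_num
  rw [hby]
  have h3 : (3:ℝ) / (2 * (2 * (v:ℝ))⁻¹) = 3 * v := by field_simp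
  rw [h3, ← mul_assoc, mul_comm (Real.sqrt (2 * π * v))⁻¹ _, mul_assoc, h2]
  ring

end Moments

section PiLayer
variable {v : ℝ≥0} {D : ℕ}

lemma integral_pi_pow (v : ℝ≥0) (m : Fin D → ℕ) :
    (∫ x : Fin D → ℝ, ∏ l, (x l) ^ (m l) ∂Measure.pi (fun _ => gaussianReal 0 v)) =
      ∏ l, ∫ t, t ^ (m l) ∂gaussianReal 0 v := by
  letI : MeasureSpace ℝ := ⟨gaussianReal 0 v⟩
  haveI : SigmaFinite (volume : Measure ℝ) :=
    inferInstanceAs (SigmaFinite (gaussianReal 0 v))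
  exact integral_fintype_prod_eq_prod (fun l t => t ^ (m l))

lemma integrable_pi_pow (v : ℝ≥0) (hv : v ≠ 0) (m : Fin D → ℕ) :
    Integrable (fun x : Fin D → ℝ => ∏ l, (x l) ^ (m l))
      (Measure.pi (fun _ => gaussianReal 0 v)) := by
  letI : MeasureSpace ℝ := ⟨gaussianReal 0 v⟩
  haveI : SigmaFinite (volume : Measure ℝ) :=
    inferInstanceAs (SigmaFinite (gaussianReal 0 v))
  exact Integrable.fintype_prod (fun l =>
    (by exact integrable_pow_gaussianReal hv (m l) : Integrable (fun t : ℝ => t ^ (m l)) volume))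

end PiLayer

def indic {β : Type*} [DecidableEq β] (a k : β) : ℕ := if a = k then 1 else 0

lemma prod_pow_indic {D : ℕ} (x : Fin D → ℝ) (a : Fin D) :
    (∏ l, (x l) ^ (indic a l)) = x a := by
  simp [indic, pow_ite, Finset.prod_ite_eq]

lemma pair_eq_prod {D : ℕ} (a c : Fin D) (x : Fin D → ℝ) :
    x a * x c = ∏ l, (x l) ^ (indic a l + indic c l) := by
  simp only [pow_add, Finset.prod_mul_distrib, prod_pow_indic]

lemma quad_eq_prod {D : ℕ} (a b c e : Fin D) (x : Fin D → ℝ) :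
    x a * x b * x c * x e = ∏ l, (x l) ^ (indic a l + indic b l + indic c l + indic e l) := by
  simp only [pow_add, Finset.prod_mul_distrib, prod_pow_indic]

section RowLayer
variable {v : ℝ≥0} {D : ℕ}

lemma mom_one' {v : ℝ≥0} (hv : v ≠ 0) : (∫ x, x ∂gaussianReal 0 v) = 0 := by
  simpa using mom_one hv

lemma mom_zero' {v : ℝ≥0} (hv : v ≠ 0) : (∫ _x, (1:ℝ) ∂gaussianReal 0 v) = 1 := by
  simpa using mom_zero hv

lemma row_pair (hv : v ≠ 0) (a c : Fin D) :
    (∫ x : Fin D → ℝ, x a * x c ∂Measure.pi (fun _ => gaussianReal 0 v)) =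
      if a = c then (v:ℝ) else 0 := by
  simp only [pair_eq_prod a c]
  rw [integral_pi_pow]
  by_cases hac : a = c
  · subst hac
    have hl : ∀ l, (∫ t, t ^ (indic a l + indic a l) ∂gaussianReal 0 v)
        = if a = l then (v:ℝ) else 1 := by
      intro l
      by_cases h : a = l
      · simp [indic, h, mom_two hv]
      · simp [indic, h, mom_zero' hv]
    rw [Finset.prod_congr rfl (fun l _ => hl l), Finset.prod_ite_eq]
    simp
  · rw [Finset.prod_eq_zero (Finset.mem_univ a)
      (by simp [indic, hac, (Ne.symm hac : c ≠ a), mom_one' hv]), if_neg hac]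

lemma row_quad (hv : v ≠ 0) (a b c e : Fin D) :
    (∫ x : Fin D → ℝ, x a * x b * x c * x e ∂Measure.pi (fun _ => gaussianReal 0 v)) =
      (v:ℝ)^2 * ((if a = b then (1:ℝ) else 0) * (if c = e then (1:ℝ) else 0)
        + (if a = c then (1:ℝ) else 0) * (if b = e then (1:ℝ) else 0)
        + (if a = e then (1:ℝ) else 0) * (if b = c then (1:ℝ) else 0)) := by
  have key2 : ∀ (p q : Fin D) (m : Fin D → ℕ), p ≠ q →
      (∀ l, m l = (if p = l then 2 else 0) + (if q = l then 2 else 0)) →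
      (∏ l, ∫ t, t ^ (m l) ∂gaussianReal 0 v) = (v:ℝ)^2 := by
    intro p q m hpq hm
    have hl : ∀ l, (∫ t, t ^ (m l) ∂gaussianReal 0 v)
        = (if p = l then (v:ℝ) else 1) * (if q = l then (v:ℝ) else 1) := by
      intro l
      by_cases h1 : p = l <;> by_cases h2 : q = l
      · exact absurd (h1.trans h2.symm) hpq
      · simp [hm l, h1, h2, mom_two hv]
      · simp [hm l, h1, h2, mom_two hv]
      · simp [hm l, h1, h2, mom_zero' hv]
    rw [Finset.prod_congr rfl (fun l _ => hl l), Finset.prod_mul_distrib,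
      Finset.prod_ite_eq, Finset.prod_ite_eq]
    simp [sq]
  simp only [quad_eq_prod a b c e]
  rw [integral_pi_pow]
  by_cases hab : a = b
  · subst hab
    by_cases hac : a = c
    · subst hac
      by_cases hae : a = e
      · subst hae
        -- all equal : fourth moment
        have hl : ∀ l, (∫ t, t ^ (indic a l + indic a l + indic a l + indic a l)
            ∂gaussianReal 0 v) = if a = l then 3 * (v:ℝ)^2 else 1 := by
          intro l
          by_cases h : a = l
          · simp [indic, h, mom_four hv]
          · simp [indic, h, mom_zero' hv]
        rw [Finset.prod_congr rfl (fun l _ => hl l), Finset.prod_ite_eq]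
        simp
        ring
      · -- a = b = c ≠ e
        rw [Finset.prod_eq_zero (Finset.mem_univ e)
          (by simp [indic, hae, (Ne.symm hae : e ≠ a), mom_one' hv])]
        simp [hae, Ne.symm hae]
    · by_cases hae : a = e
      · subst hae
        -- a = b = e ≠ c
        rw [Finset.prod_eq_zero (Finset.mem_univ c)
          (by simp [indic, hac, (Ne.symm hac : c ≠ a), mom_one' hv])]
        simp [hac, Ne.symm hac]
      · by_cases hce : c = e
        · subst hce
          -- a = b, c = e, a ≠ c
          rw [key2 a c _ hac (by
            intro l
            by_cases h1 : a = l <;> by_cases h2 : c = l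
            · exact absurd (h1.trans h2.symm) hac
            all_goals simp [indic, h1, h2])]
          simp [hac, hae, Ne.symm hac, Ne.symm hae]
        · -- a = b, and a, c, e all distinct from a or c≠e : zero
          rw [Finset.prod_eq_zero (Finset.mem_univ c)
            (by simp [indic, hac, (Ne.symm hac : c ≠ a),
              hce, Ne.symm hce, mom_one' hv])]
          simp [hac, hae, hce, Ne.symm hac, Ne.symm hae, Ne.symm hce]
  · by_cases hac : a = c
    · subst hac
      by_cases hbe : b = e
      · subst hbe
        -- a = c, b = e, a ≠ b
        rw [key2 a b _ hab (by
          intro l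
          by_cases h1 : a = l <;> by_cases h2 : b = l
          · exact absurd (h1.trans h2.symm) hab
          all_goals simp [indic, h1, h2])]
        simp [hab, Ne.symm hab]
      · by_cases hae : a = e
        · subst hae
          -- a = c = e ≠ b
          rw [Finset.prod_eq_zero (Finset.mem_univ b)
            (by simp [indic, hab, (Ne.symm hab : b ≠ a), mom_one' hv])]
          simp [hab, hbe, Ne.symm hab, Ne.symm hbe]
        · -- a = c, b ≠ e, a ≠ e : zero
          rw [Finset.prod_eq_zero (Finset.mem_univ b)
            (by simp [indic, hab, (Ne.symm hab : b ≠ a),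
              hbe, Ne.symm hbe, mom_one' hv])]
          simp [hab, hbe, hae, Ne.symm hab, Ne.symm hbe, Ne.symm hae]
    · by_cases hae : a = e
      · subst hae
        by_cases hbc : b = c
        · subst hbc
          -- a = e, b = c, a ≠ b
          rw [key2 a b _ hab (by
            intro l
            by_cases h1 : a = l <;> by_cases h2 : b = l
            · exact absurd (h1.trans h2.symm) hab
            all_goals simp [indic, h1, h2])]
          simp [hab, hac, Ne.symm hab, Ne.symm hac]
        · -- a = e, b ≠ c, a ≠ b, a ≠ c : zero
          rw [Finset.prod_eq_zero (Finset.mem_univ b)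
            (by simp [indic, hab, (Ne.symm hab : b ≠ a),
              hbc, Ne.symm hbc, mom_one' hv])]
          simp [hab, hac, hbc, Ne.symm hab, Ne.symm hac, Ne.symm hbc]
      · -- a distinct from b, c, e : zero
        rw [Finset.prod_eq_zero (Finset.mem_univ a)
          (by simp [indic, hab, hac, hae,
            (Ne.symm hab : b ≠ a), (Ne.symm hac : c ≠ a),
            (Ne.symm hae : e ≠ a), mom_one' hv])]
        simp [hab, hac, hae, Ne.symm hab, Ne.symm hac, Ne.symm hae]

end RowLayer

section MatLayer
variable {v : ℝ≥0} {d D : ℕ}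

lemma integral_pi_prod {ι : Type*} [Fintype ι] {E : Type*} [MeasurableSpace E]
    (μ : Measure E) [SigmaFinite μ] (h : ι → E → ℝ) :
    (∫ x : ι → E, ∏ k, h k (x k) ∂Measure.pi (fun _ => μ)) = ∏ k, ∫ t, h k t ∂μ := by
  letI : MeasureSpace E := ⟨μ⟩
  haveI : SigmaFinite (volume : Measure E) := ‹SigmaFinite μ›
  exact integral_fintype_prod_eq_prod h

lemma integrable_pi_prod {ι : Type*} [Fintype ι] {E : Type*} [MeasurableSpace E]
    {μ : Measure E} [SigmaFinite μ] {h : ι → E → ℝ} (hh : ∀ k, Integrable (h k) μ) :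
    Integrable (fun x : ι → E => ∏ k, h k (x k)) (Measure.pi (fun _ => μ)) := by
  letI : MeasureSpace E := ⟨μ⟩
  haveI : SigmaFinite (volume : Measure E) := ‹SigmaFinite μ›
  exact Integrable.fintype_prod hh

lemma mat_single (i : Fin d) (f : (Fin D → ℝ) → ℝ) :
    (∫ s : Fin d → Fin D → ℝ, f (s i)
        ∂Measure.pi (fun _ => Measure.pi (fun _ : Fin D => gaussianReal 0 v))) =
      ∫ x, f x ∂Measure.pi (fun _ : Fin D => gaussianReal 0 v) := by
  have h1 : ∀ s : Fin d → Fin D → ℝ, f (s i) = ∏ k, (if i = k then f (s k) else 1) := by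
    intro s
    rw [Finset.prod_ite_eq]
    simp
  simp only [h1]
  rw [integral_pi_prod _ (fun k x => if i = k then f x else 1)]
  have h2 : ∀ k, (∫ x, (if i = k then f x else 1)
      ∂Measure.pi (fun _ : Fin D => gaussianReal 0 v)) =
      if i = k then ∫ x, f x ∂Measure.pi (fun _ : Fin D => gaussianReal 0 v) else 1 := by
    intro k
    by_cases h : i = k <;> simp [h]
  rw [Finset.prod_congr rfl fun k _ => h2 k, Finset.prod_ite_eq]
  simp

lemma mat_pair (i j : Fin d) (hij : i ≠ j) (f g : (Fin D → ℝ) → ℝ) :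
    (∫ s : Fin d → Fin D → ℝ, f (s i) * g (s j)
        ∂Measure.pi (fun _ => Measure.pi (fun _ : Fin D => gaussianReal 0 v))) =
      (∫ x, f x ∂Measure.pi (fun _ : Fin D => gaussianReal 0 v)) *
        ∫ x, g x ∂Measure.pi (fun _ : Fin D => gaussianReal 0 v) := by
  have h1 : ∀ s : Fin d → Fin D → ℝ, f (s i) * g (s j) =
      ∏ k, ((if i = k then f (s k) else 1) * (if j = k then g (s k) else 1)) := by
    intro s
    rw [Finset.prod_mul_distrib, Finset.prod_ite_eq, Finset.prod_ite_eq]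
    simp
  simp only [h1]
  rw [integral_pi_prod _
    (fun k x => (if i = k then f x else 1) * (if j = k then g x else 1))]
  have h2 : ∀ k, (∫ x, (if i = k then f x else 1) * (if j = k then g x else 1)
      ∂Measure.pi (fun _ : Fin D => gaussianReal 0 v)) =
      (if i = k then ∫ x, f x ∂Measure.pi (fun _ : Fin D => gaussianReal 0 v) else 1) *
        (if j = k then ∫ x, g x ∂Measure.pi (fun _ : Fin D => gaussianReal 0 v) else 1) := by
    intro k
    by_cases h : i = k <;> by_cases h' : j = k
    · exact absurd (h.trans h'.symm) hij
    all_goals simp [h, h']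
  rw [Finset.prod_congr rfl fun k _ => h2 k, Finset.prod_mul_distrib,
    Finset.prod_ite_eq, Finset.prod_ite_eq]
  simp

lemma row_int_pair (hv : v ≠ 0) (a c : Fin D) :
    Integrable (fun x : Fin D → ℝ => x a * x c)
      (Measure.pi (fun _ => gaussianReal 0 v)) := by
  simp only [pair_eq_prod a c]
  exact integrable_pi_pow v hv _

lemma row_int_quad (hv : v ≠ 0) (a b c e : Fin D) :
    Integrable (fun x : Fin D → ℝ => x a * x b * x c * x e)
      (Measure.pi (fun _ => gaussianReal 0 v)) := by
  simp only [quad_eq_prod a b c e]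
  exact integrable_pi_pow v hv _

lemma mat_integrable_mono (hv : v ≠ 0) (i j : Fin d) (a b c e : Fin D) :
    Integrable (fun s : Fin d → Fin D → ℝ => s i a * s j b * s i c * s j e)
      (Measure.pi (fun _ => Measure.pi (fun _ : Fin D => gaussianReal 0 v))) := by
  have h1 : (fun s : Fin d → Fin D → ℝ => s i a * s j b * s i c * s j e) =
      fun s => ∏ k, ((if i = k then s k a * s k c else 1) *
        (if j = k then s k b * s k e else 1)) := by
    funext s
    rw [Finset.prod_mul_distrib, Finset.prod_ite_eq, Finset.prod_ite_eq]
    simp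
    ring
  rw [h1]
  refine integrable_pi_prod (μ := Measure.pi (fun _ : Fin D => gaussianReal 0 v))
    (h := fun k x => (if i = k then x a * x c else 1) * (if j = k then x b * x e else 1)) ?_
  intro k
  by_cases h : i = k <;> by_cases h' : j = k <;> simp only [h, h', if_pos, if_neg,
    if_true, if_false, one_mul, mul_one, ite_true, ite_false]
  · have : (fun x : Fin D → ℝ => (x a * x c) * (x b * x e)) =
        fun x => x a * x b * x c * x e := by funext x; ring
    rw [this]
    exact row_int_quad hv a b c e
  · exact row_int_pair hv a c
  · exact row_int_pair hv b e
  · exact integrable_const 1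

lemma mat_mono_eval (hv : v ≠ 0) (i j : Fin d) (a b c e : Fin D) :
    (∫ s : Fin d → Fin D → ℝ, s i a * s j b * s i c * s j e
        ∂Measure.pi (fun _ => Measure.pi (fun _ : Fin D => gaussianReal 0 v))) =
      (v:ℝ)^2 * ((if i = j then (1:ℝ) else 0) *
          ((if a = b then (1:ℝ) else 0) * (if c = e then (1:ℝ) else 0)
            + (if a = e then (1:ℝ) else 0) * (if b = c then (1:ℝ) else 0))
        + (if a = c then (1:ℝ) else 0) * (if b = e then (1:ℝ) else 0)) := by
  by_cases hij : i = j
  · subst hij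
    have hs := mat_single (v := v) (d := d) i (fun x : Fin D → ℝ => x a * x b * x c * x e)
    simp only [] at hs
    rw [hs, row_quad hv a b c e]
    simp only [if_pos rfl, ite_true]
    ring
  · have hs := mat_pair (v := v) i j hij (fun x : Fin D → ℝ => x a * x c)
      (fun x : Fin D → ℝ => x b * x e)
    simp only [] at hs
    have hcomm : (∫ s : Fin d → Fin D → ℝ, s i a * s j b * s i c * s j e
        ∂Measure.pi (fun _ => Measure.pi (fun _ : Fin D => gaussianReal 0 v))) =
        ∫ s : Fin d → Fin D → ℝ, s i a * s i c * (s j b * s j e)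
        ∂Measure.pi (fun _ => Measure.pi (fun _ : Fin D => gaussianReal 0 v)) := by
      congr 1
      funext s
      ring
    rw [hcomm, hs, row_pair hv a c, row_pair hv b e]
    simp only [hij, if_false, ite_false, zero_mul, mul_zero, zero_add]
    by_cases hac : a = c <;> by_cases hbe : b = e <;> simp [hac, hbe] <;> ring

end MatLayer

lemma mInner_sum {n : Type*} [Fintype n] (X B : Matrix n n ℝ) :
    mInner X B = ∑ i, ∑ j, X i j * B i j := by
  simp only [mInner, Matrix.trace, Matrix.diag, Matrix.mul_apply, Matrix.transpose_apply]
  rw [Finset.sum_comm]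

lemma expand_integrand (D d : ℕ) (y : Fin D → ℝ) (A : Matrix (Fin D) (Fin D) ℝ) :
    (fun s : Fin d → Fin D → ℝ => mInner (vecMulVec (Matrix.of s *ᵥ y) (Matrix.of s *ᵥ y))
        (Matrix.of s * A * (Matrix.of s)ᵀ)) =
      fun s => ∑ p : (Fin d × Fin d) × (Fin D × Fin D) × (Fin D × Fin D),
        (y p.2.2.2 * y p.2.2.1 * A p.2.1.2 p.2.1.1) *
          (s p.1.1 p.2.2.2 * s p.1.2 p.2.2.1 * s p.1.1 p.2.1.2 * s p.1.2 p.2.1.1) := by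
  funext s
  simp only [Fintype.sum_prod_type]
  rw [mInner_sum]
  simp only [Matrix.vecMulVec_apply, Matrix.mul_apply, Matrix.transpose_apply,
    Matrix.mulVec, dotProduct, Matrix.of_apply, Finset.sum_mul, Finset.mul_sum]
  refine Finset.sum_congr rfl fun i _ => Finset.sum_congr rfl fun j _ =>
    Finset.sum_congr rfl fun e _ => Finset.sum_congr rfl fun c _ =>
    Finset.sum_congr rfl fun b _ => Finset.sum_congr rfl fun a _ => by ring

end Aux

/-- Sketch expectation (Lemma `sketch-quadratic-form-expectation`, Section 6).  For
`y ∈ ℝ^D`, symmetric `A ∈ ℝ^{D×D}` and a random `d×D` matrix `S` of i.i.d. Gaussians of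
mean `0` and variance `1/d`:

`E_S ⟨(Sy)(Sy)ᵀ, S A Sᵀ⟩ = (1 + 1/d) ⟨y yᵀ, A⟩ + (‖y‖₂²/d) Tr A`. -/
theorem sketch_quadratic_form_expectation (D d : ℕ) (hd : 0 < d)
    (y : Fin D → ℝ) (A : Matrix (Fin D) (Fin D) ℝ) (hA : A.IsSymm) :
    (∫ s, mInner (vecMulVec (Matrix.of s *ᵥ y) (Matrix.of s *ᵥ y))
        (Matrix.of s * A * (Matrix.of s)ᵀ) ∂gaussMat d D) =
      (1 + 1 / (d : ℝ)) * mInner (vecMulVec y y) A + (l2norm y) ^ 2 / d * A.trace := by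
  have hd0 : (d:ℝ) ≠ 0 := Nat.cast_ne_zero.mpr hd.ne'
  have hv : ((d:ℝ≥0))⁻¹ ≠ 0 := inv_ne_zero (Nat.cast_ne_zero.mpr hd.ne')
  rw [show (∫ s, mInner (vecMulVec (Matrix.of s *ᵥ y) (Matrix.of s *ᵥ y))
        (Matrix.of s * A * (Matrix.of s)ᵀ) ∂gaussMat d D) =
      ∫ s, (∑ p : (Fin d × Fin d) × (Fin D × Fin D) × (Fin D × Fin D),
        (y p.2.2.2 * y p.2.2.1 * A p.2.1.2 p.2.1.1) *
          (s p.1.1 p.2.2.2 * s p.1.2 p.2.2.1 * s p.1.1 p.2.1.2 * s p.1.2 p.2.1.1))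
      ∂Measure.pi (fun _ : Fin d => Measure.pi fun _ : Fin D => gaussianReal 0 (d:ℝ≥0)⁻¹)
      from by rw [expand_integrand D d y A]; rfl]
  rw [integral_finset_sum Finset.univ (fun p _ =>
    ((mat_integrable_mono hv p.1.1 p.1.2 p.2.2.2 p.2.2.1 p.2.1.2 p.2.1.1).const_mul _))]
  rw [Finset.sum_congr rfl (fun p _ => by
    rw [integral_const_mul,
      mat_mono_eval hv p.1.1 p.1.2 p.2.2.2 p.2.2.1 p.2.1.2 p.2.1.1])]
  simp only [Fintype.sum_prod_type]
  have hyy : mInner (vecMulVec y y) A = ∑ a, ∑ b, y a * y b * A a b := by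
    rw [mInner_sum]
    simp [Matrix.vecMulVec_apply]
  have hl2 : (l2norm y) ^ 2 = ∑ a, (y a) ^ 2 :=
    Real.sq_sqrt (Finset.sum_nonneg fun _ _ => sq_nonneg _)
  have htr : A.trace = ∑ c, A c c := rfl
  have hV : (((d:ℝ≥0)⁻¹ : ℝ≥0) : ℝ) = (d:ℝ)⁻¹ := by push_cast; ring
  rw [hyy, hl2, htr, hV]
  simp only [mul_add, mul_ite, ite_mul, mul_zero, zero_mul, mul_one, one_mul,
    Finset.sum_add_distrib, Finset.sum_ite_eq, Finset.sum_ite_eq', Finset.mem_univ,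
    if_true, Finset.sum_ite_irrel, Finset.sum_const_zero]
  simp only [Finset.sum_const, Finset.card_univ, Fintype.card_fin, nsmul_eq_mul]
  have hC1 : (∑ p : Fin D, ∑ q : Fin D, y q * y q * A p p * ((d:ℝ))⁻¹ ^ 2) =
      ((d:ℝ))⁻¹ ^ 2 * ((∑ a, (y a) ^ 2) * ∑ c, A c c) := by
    rw [Finset.sum_mul_sum, Finset.sum_comm]
    simp only [Finset.mul_sum]
    exact Finset.sum_congr rfl fun q _ => Finset.sum_congr rfl fun p _ => by ring
  have hC3 : (∑ p : Fin D, ∑ q : Fin D, y q * y p * A q p * ((d:ℝ))⁻¹ ^ 2) =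
      ((d:ℝ))⁻¹ ^ 2 * ∑ a, ∑ b, y a * y b * A a b := by
    rw [Finset.sum_comm]
    simp only [Finset.mul_sum]
    exact Finset.sum_congr rfl fun q _ => Finset.sum_congr rfl fun p _ => by ring
  have hC2 : (∑ p : Fin D, ∑ q : Fin D, y p * y q * A q p * ((d:ℝ))⁻¹ ^ 2) =
      ((d:ℝ))⁻¹ ^ 2 * ∑ a, ∑ b, y a * y b * A a b := by
    simp only [Finset.mul_sum]
    refine Finset.sum_congr rfl fun p _ => Finset.sum_congr rfl fun q _ => ?_
    rw [hA.apply p q]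
    ring
  rw [hC1, hC2, hC3]
  field_simp
  ring
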